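/- If a ZFSet u belongs to at least one Anfang, then there exists an Anfang M such that u ∈ M and M ⊆ M' for every Anfang M' with u ∈ M' (that is, a least Anfang containing u exists). -/
import Mathlib


/-- The von Neumann natural number `n̄`: `0̄ = ∅`, `(n+1)‾ = n̄⁺ = insert n̄ n̄`. -/
def vN : ℕ → ZFSet
  | 0 => ∅
  | n + 1 => insert (vN n) (vN n)

/-- An *Anfang* in the sense of von Neumann's letter to Fraenkel of 17 June 1927:
every element `u` of `M` is either the pair `⟨1̄, ω⟩` or of the form `⟨x⁺, ℘(y)⟩`
for some pair `⟨x, y⟩ ∈ M`. -/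
def Anfang (M : ZFSet) : Prop :=
  ∀ u ∈ M, u = ZFSet.pair (vN 1) ZFSet.omega ∨
    ∃ x y : ZFSet, ZFSet.pair x y ∈ M ∧ u = ZFSet.pair (insert x x) (ZFSet.powerset y)

lemma succ_inj' {x x' : ZFSet} (h : insert x x = insert x' x') : x = x' := by
  have h1 : x ∈ insert x' x' := h ▸ ZFSet.mem_insert x x
  have h2 : x' ∈ insert x x := h ▸ ZFSet.mem_insert x' x'
  rcases ZFSet.mem_insert_iff.mp h1 with h1 | h1
  · exact h1
  rcases ZFSet.mem_insert_iff.mp h2 with h2 | h2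
  · exact h2.symm
  · exact absurd h1 (ZFSet.mem_asymm h2)

lemma powerset_inj' {y y' : ZFSet} (h : ZFSet.powerset y = ZFSet.powerset y') : y = y' := by
  have h1 : y ∈ ZFSet.powerset y' := h ▸ ZFSet.mem_powerset.mpr (fun z hz => hz)
  have h2 : y' ∈ ZFSet.powerset y := h ▸ ZFSet.mem_powerset.mpr (fun z hz => hz)
  exact ZFSet.ext fun z => ⟨fun hz => ZFSet.mem_powerset.mp h1 hz,
    fun hz => ZFSet.mem_powerset.mp h2 hz⟩

/-- If `u` belongs to at least one Anfang, then there is a least Anfang containing `u`. -/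
theorem exists_least_Anfang {u : ZFSet} (h : ∃ M : ZFSet, Anfang M ∧ u ∈ M) :
    ∃ M : ZFSet, Anfang M ∧ u ∈ M ∧ ∀ M' : ZFSet, Anfang M' → u ∈ M' → M ⊆ M' := by
  obtain ⟨M₀, hA₀, hu₀⟩ := h
  refine ⟨M₀.sep (fun v => ∀ M' : ZFSet, Anfang M' → u ∈ M' → v ∈ M'), ?_, ?_, ?_⟩
  · intro v hv
    rw [ZFSet.mem_sep] at hv
    obtain ⟨hv0, hvall⟩ := hv
    by_cases hc : v = ZFSet.pair (vN 1) ZFSet.omega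
    · exact Or.inl hc
    rcases hA₀ v hv0 with h1 | ⟨x, y, hxy, hveq⟩
    · exact absurd h1 hc
    refine Or.inr ⟨x, y, ?_, hveq⟩
    rw [ZFSet.mem_sep]
    refine ⟨hxy, fun M' hA' hu' => ?_⟩
    have hvM' : v ∈ M' := hvall M' hA' hu'
    rcases hA' v hvM' with h1 | ⟨x', y', hxy', hveq'⟩
    · exact absurd h1 hc
    have := hveq ▸ hveq'
    obtain ⟨hx, hy⟩ := ZFSet.pair_injective this
    rw [succ_inj' hx, powerset_inj' hy]
    exact hxy'
  · exact ZFSet.mem_sep.mpr ⟨hu₀, fun M' _ hu' => hu'⟩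
  · intro M' hA' hu' v hv
    exact (ZFSet.mem_sep.mp hv).2 M' hA' hu'
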